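/- Truth Lemma for the canonical pseudo-model: for every formula φ of L_D and every maximal SC-consistent set Γ (viewed as a world of the canonical pseudo-model Mc), φ ∈ Γ if and only if Mc,Γ ⊨ φ. -/

import Mathlib

attribute [local instance] Classical.propDecidable

noncomputable section

/-- Formulas of the epistemic language `L_D` with distributed knowledge `D_B`
for nonempty groups `B` of agents. -/
inductive Form (A AP : Type) : Type
  | atom : AP → Form A AP
  | neg  : Form A AP → Form A AP
  | and  : Form A AP → Form A AP → Form A AP
  | dk   : (B : Finset A) → B.Nonempty → Form A AP → Form A AP

namespace Form

variable {A AP : Type}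

/-- Disjunction, `φ ∨ ψ := ¬(¬φ ∧ ¬ψ)`. -/
def or (φ ψ : Form A AP) : Form A AP := neg ((neg φ).and (neg ψ))

/-- Implication, `φ ⇒ ψ := ¬φ ∨ ψ`. -/
def imp (φ ψ : Form A AP) : Form A AP := (neg φ).or ψ

/-- `⊤ := p ∨ ¬p`. -/
def verum [Nonempty AP] : Form A AP :=
  (atom (Classical.arbitrary AP)).or (neg (atom (Classical.arbitrary AP)))

/-- `⊥ := ¬⊤`. -/
def falsum [Nonempty AP] : Form A AP := neg verum

/-- Individual knowledge `K_a φ := D_{{a}} φ`. -/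
def K (a : A) (φ : Form A AP) : Form A AP := dk {a} (Finset.singleton_nonempty a) φ

/-- `dead_a := K_a ⊥`. -/
def deadAgent [Nonempty AP] (a : A) : Form A AP := K a falsum

/-- `alive_a := ¬dead_a`. -/
def aliveAgent [Nonempty AP] (a : A) : Form A AP := (deadAgent a).neg

/-- `alive_B := ¬ D_B ⊥`. -/
def aliveGrp [Nonempty AP] (B : Finset A) (hB : B.Nonempty) : Form A AP := (dk B hB falsum).neg

/-- Finite conjunction. -/
def bigAnd [Nonempty AP] : List (Form A AP) → Form A AP
  | [] => verum
  | φ :: t => φ.and (bigAnd t)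

/-- Finite disjunction. -/
def bigOr [Nonempty AP] : List (Form A AP) → Form A AP
  | [] => falsum
  | φ :: t => φ.or (bigOr t)

/-- `dead_C := ⋀_{a ∈ C} dead_a`. -/
def deadGrp [Nonempty AP] (C : Finset A) : Form A AP := bigAnd (C.toList.map deadAgent)

end Form

/-- A propositional tautology: true under every assignment that interprets `¬` and `∧`
classically (atoms and `D_B`-formulas are treated as opaque). -/
def IsTaut {A AP : Type} (φ : Form A AP) : Prop :=
  ∀ v : Form A AP → Prop,
    (∀ ψ : Form A AP, v ψ.neg ↔ ¬ v ψ) →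
    (∀ ψ χ : Form A AP, v (ψ.and χ) ↔ (v ψ ∧ v χ)) →
    v φ

theorem unionNE {α : Type} [DecidableEq α] {s t : Finset α} (h : s.Nonempty) :
    (s ∪ t).Nonempty :=
  ⟨h.choose, Finset.mem_union_left _ h.choose_spec⟩

section ProofSystem

variable {A AP : Type} [Fintype A] [Nonempty AP]

/-- The proof system `SC` (axioms `K`, `B`, `4`, `Mono`, `Union`, `NE`, `P`, all
propositional tautologies, modus ponens and necessitation), extended by an arbitrary
additional set `Ax` of axioms. -/
inductive Prf (Ax : Form A AP → Prop) : Form A AP → Prop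
  | taut {φ : Form A AP} : IsTaut φ → Prf Ax φ
  | mp {φ ψ : Form A AP} : Prf Ax (φ.imp ψ) → Prf Ax φ → Prf Ax ψ
  | nec {φ : Form A AP} (B : Finset A) (hB : B.Nonempty) :
      Prf Ax φ → Prf Ax (Form.dk B hB φ)
  | axK {φ ψ : Form A AP} (B : Finset A) (hB : B.Nonempty) :
      Prf Ax ((Form.dk B hB (φ.imp ψ)).imp ((Form.dk B hB φ).imp (Form.dk B hB ψ)))
  | axB {φ : Form A AP} (B : Finset A) (hB : B.Nonempty) :
      Prf Ax (φ.imp (Form.dk B hB (Form.neg (Form.dk B hB φ.neg))))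
  | ax4 {φ : Form A AP} (B : Finset A) (hB : B.Nonempty) :
      Prf Ax ((Form.dk B hB φ).imp (Form.dk B hB (Form.dk B hB φ)))
  | axMono {φ : Form A AP} (B B' : Finset A) (hB : B.Nonempty) (hB' : B'.Nonempty)
      (hsub : B ⊆ B') : Prf Ax ((Form.dk B hB φ).imp (Form.dk B' hB' φ))
  | axUnion (B B' : Finset A) (hB : B.Nonempty) (hB' : B'.Nonempty) :
      Prf Ax (((Form.aliveGrp B hB).and (Form.aliveGrp B' hB')).imp
        (Form.aliveGrp (B ∪ B') (unionNE hB)))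
  | axNE : Prf Ax (Form.bigOr ((Finset.univ : Finset A).toList.map Form.aliveAgent))
  | axP {φ : Form A AP} (B : Finset A) (hB : B.Nonempty) :
      Prf Ax ((((Form.aliveGrp B hB).and (Form.deadGrp Bᶜ)).and φ).imp
        (Form.dk B hB ((Form.deadGrp Bᶜ).imp φ)))
  | extra {φ : Form A AP} : Ax φ → Prf Ax φ

/-- Provability in `SC` itself (no extra axioms). -/
def SC : Form A AP → Prop := Prf (fun _ => False)

/-- Instances of Axiom `Min : alive_B ∧ dead_{A∖B} ⇒ D_B dead_{A∖B}` for `B ⊊ A`. -/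
def MinAx : Form A AP → Prop := fun φ =>
  ∃ (B : Finset A) (hB : B.Nonempty), B ≠ Finset.univ ∧
    φ = ((Form.aliveGrp B hB).and (Form.deadGrp Bᶜ)).imp (Form.dk B hB (Form.deadGrp Bᶜ))

/-- Instances of Axiom `Max : alive_B ⇒ ¬ D_B ¬ dead_{A∖B}` for `B ⊊ A`. -/
def MaxAx : Form A AP → Prop := fun φ =>
  ∃ (B : Finset A) (hB : B.Nonempty), B ≠ Finset.univ ∧
    φ = (Form.aliveGrp B hB).imp (Form.neg (Form.dk B hB (Form.neg (Form.deadGrp Bᶜ))))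

/-- Provability in `SCmin = SC + Min`. -/
def SCmin : Form A AP → Prop := Prf MinAx

/-- Provability in `SCmax = SC + Max`. -/
def SCmax : Form A AP → Prop := Prf MaxAx

/-- `Γ ⊢_P φ` : some finite conjunction of members of `Γ` provably implies `φ`. -/
def ProvesFrom (P : Form A AP → Prop) (Γ : Set (Form A AP)) (φ : Form A AP) : Prop :=
  ∃ L : List (Form A AP), (∀ γ ∈ L, γ ∈ Γ) ∧ P ((Form.bigAnd L).imp φ)

/-- Consistency of a set of formulas with respect to a provability predicate `P`. -/
def ConsistentSet (P : Form A AP → Prop) (Γ : Set (Form A AP)) : Prop :=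
  ¬ ProvesFrom P Γ Form.falsum

/-- Maximal consistent sets of formulas. -/
def MaxConsistent (P : Form A AP → Prop) (Γ : Set (Form A AP)) : Prop :=
  ConsistentSet P Γ ∧ ∀ φ ∉ Γ, ¬ ConsistentSet P (insert φ Γ)

end ProofSystem

/-! ### Simplicial models -/

/-- The data of a (generalized) simplicial model: a set `S` of simplexes over the vertex
type `V`, a colouring `chi`, a set of worlds `Wld` and a labelling of worlds. -/
structure SimpData (A AP V : Type) where
  S : Set (Finset V)
  chi : V → A
  Wld : Set (Finset V)
  label : Finset V → Set AP

namespace SimpData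

variable {A AP V : Type}

/-- A facet: a simplex maximal under inclusion. -/
def IsFacet (C : SimpData A AP V) (X : Finset V) : Prop :=
  X ∈ C.S ∧ ∀ Y ∈ C.S, X ⊆ Y → X = Y

/-- `⟨V,S,chi⟩` is a chromatic simplicial complex: simplexes are nonempty, every
singleton is a simplex, `S` is downward closed, and every simplex has pairwise
distinct colours. -/
def IsComplex (C : SimpData A AP V) : Prop :=
  (∀ X ∈ C.S, X.Nonempty) ∧
  (∀ v : V, ({v} : Finset V) ∈ C.S) ∧
  (∀ X ∈ C.S, ∀ Y : Finset V, Y ⊆ X → Y.Nonempty → Y ∈ C.S) ∧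
  (∀ X ∈ C.S, ∀ v ∈ X, ∀ w ∈ X, C.chi v = C.chi w → v = w)

/-- `C` is a generalized simplicial model: a chromatic simplicial complex together
with a set of worlds `Wld` with `Facets(C) ⊆ Wld ⊆ S`. -/
def IsModel (C : SimpData A AP V) : Prop :=
  C.IsComplex ∧ (∀ X, C.IsFacet X → X ∈ C.Wld) ∧ C.Wld ⊆ C.S

/-- The model is minimal: the worlds are exactly the facets. -/
def Minimal (C : SimpData A AP V) : Prop := ∀ X, X ∈ C.Wld ↔ C.IsFacet X

/-- The model is maximal: every simplex is a world. -/
def Maximal (C : SimpData A AP V) : Prop := C.Wld = C.S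

end SimpData

/-- Satisfaction on simplicial models: `C,w ⊨ D_B φ` iff `φ` holds at every world `w'`
with `B ⊆ chi(w ∩ w')`. -/
def SimpData.sat {A AP V : Type} (C : SimpData A AP V) : Finset V → Form A AP → Prop
  | w, .atom p => p ∈ C.label w
  | w, .neg φ => ¬ C.sat w φ
  | w, .and φ ψ => C.sat w φ ∧ C.sat w ψ
  | w, .dk B _ φ => ∀ w' ∈ C.Wld, (↑B : Set A) ⊆ C.chi '' ((↑w : Set V) ∩ ↑w') → C.sat w' φ

/-! ### Partial epistemic models -/

/-- The data of a partial epistemic model: an accessibility relation for each agent and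
a labelling of worlds. -/
structure PEData (A AP W : Type) where
  rel : A → W → W → Prop
  label : W → Set AP

namespace PEData

variable {A AP W : Type}

/-- Each relation is a partial equivalence relation (symmetric and transitive). -/
def IsPE (M : PEData A AP W) : Prop := ∀ a : A, Symmetric (M.rel a) ∧ Transitive (M.rel a)

/-- The set of agents alive in a world. -/
def live (M : PEData A AP W) (w : W) : Set A := {a | M.rel a w w}

/-- Every world has at least one alive agent. -/
def NoEmptyWorld (M : PEData A AP W) : Prop := ∀ w : W, (M.live w).Nonempty

/-- Distinct worlds with the same alive agents are distinguished by some alive agent. -/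
def Proper (M : PEData A AP W) : Prop :=
  ∀ w w' : W, w ≠ w' → M.live w = M.live w' → ∃ a ∈ M.live w, ¬ M.rel a w w'

/-- The model has no sub-world. -/
def Minimal (M : PEData A AP W) : Prop :=
  ∀ w w' : W, M.live w ⊂ M.live w' → ∃ a ∈ M.live w, ¬ M.rel a w w'

/-- The model has all sub-worlds. -/
def Maximal (M : PEData A AP W) : Prop :=
  ∀ w' : W, ∀ B : Set A, B.Nonempty → B ⊂ M.live w' →
    ∃ w : W, M.live w = B ∧ ∀ a ∈ B, M.rel a w w'

end PEData

/-- Satisfaction on partial epistemic models: `M,w ⊨ D_B φ` iff `φ` holds at every `w'`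
with `w ∼_a w'` for all `a ∈ B`. -/
def PEData.sat {A AP W : Type} (M : PEData A AP W) : W → Form A AP → Prop
  | w, .atom p => p ∈ M.label w
  | w, .neg φ => ¬ M.sat w φ
  | w, .and φ ψ => M.sat w φ ∧ M.sat w ψ
  | w, .dk B _ φ => ∀ w' : W, (∀ a ∈ B, M.rel a w w') → M.sat w' φ

/-- The partial epistemic model `κ(C)` associated with a simplicial model `C`:
same worlds, `w ∼_a w'` iff `a ∈ chi(w ∩ w')`, same labelling. -/
def kappa {A AP V : Type} (C : SimpData A AP V) : PEData A AP {w : Finset V // w ∈ C.Wld} where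
  rel := fun a w w' => a ∈ C.chi '' ((↑w.1 : Set V) ∩ ↑w'.1)
  label := fun w => C.label w.1

/-- Vertices of `σ(M)`: pairs `v^w_a = (a, [w]_a)` with `a` alive in `w`. -/
def sigmaVert {A AP W : Type} (M : PEData A AP W) : Type :=
  {v : A × Set W // ∃ w : W, M.rel v.1 w w ∧ v.2 = {w' | M.rel v.1 w w'}}

/-- The world `X_w = { v^w_a | a ∈ live(w) }` of `σ(M)`. -/
def sigmaWorld {A AP W : Type} [Fintype A] (M : PEData A AP W) (w : W) :
    Finset (sigmaVert M) :=
  ((Finset.univ : Finset A).filter (fun a => M.rel a w w)).attach.image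
    (fun a => ⟨(a.1, {w' | M.rel a.1 w w'}),
      ⟨w, by exact (Finset.mem_filter.mp a.2).2, rfl⟩⟩)

/-- The simplicial model `σ(M)` associated with a partial epistemic model `M`:
simplexes are the nonempty subsets of the sets `X_w`, worlds are the `X_w`,
colouring is the first projection, and `ℓ(X_w) = L(w)`. -/
def sigmaModel {A AP W : Type} [Fintype A] (M : PEData A AP W) :
    SimpData A AP (sigmaVert M) where
  S := {X | X.Nonempty ∧ ∃ w : W, X ⊆ sigmaWorld M w}
  chi := fun v => v.1.1
  Wld := {X | ∃ w : W, X = sigmaWorld M w}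
  label := fun X => {p | ∃ w : W, X = sigmaWorld M w ∧ p ∈ M.label w}

/-! ### Pseudo-models, the canonical model and unravelling -/

/-- The data of a pseudo-model: a relation `∼_B` for every group `B ⊆ A`. -/
structure PseudoData (A AP W : Type) where
  rel : Finset A → W → W → Prop
  label : W → Set AP

/-- `M` is a pseudo-model: each `∼_B` is symmetric and transitive, the relations are
antitone (`∼_{B'} ⊆ ∼_B` for `B ⊆ B'`), and `w ∼_B w` together with `w ∼_{B'} w`
implies `w ∼_{B ∪ B'} w`. -/
def PseudoData.IsPseudo {A AP W : Type} [DecidableEq A] (M : PseudoData A AP W) : Prop :=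
  (∀ B : Finset A, Symmetric (M.rel B)) ∧
  (∀ B : Finset A, Transitive (M.rel B)) ∧
  (∀ B B' : Finset A, B ⊆ B' → ∀ w w' : W, M.rel B' w w' → M.rel B w w') ∧
  (∀ (w : W) (B B' : Finset A), M.rel B w w → M.rel B' w w → M.rel (B ∪ B') w w)

/-- Satisfaction on pseudo-models: `D_B φ` quantifies over `∼_B`-successors. -/
def PseudoData.sat {A AP W : Type} (M : PseudoData A AP W) : W → Form A AP → Prop
  | w, .atom p => p ∈ M.label w
  | w, .neg φ => ¬ M.sat w φ
  | w, .and φ ψ => M.sat w φ ∧ M.sat w ψ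
  | w, .dk B _ φ => ∀ w' : W, M.rel B w w' → M.sat w' φ

/-- The canonical pseudo-model of a proof system `P`: worlds are the maximal
`P`-consistent sets, `Γ ∼_B Δ` iff every `φ` with `D_B φ ∈ Γ` satisfies `φ ∈ Δ`,
and `L(Γ) = Γ ∩ AP`. -/
def canonicalPsm (A AP : Type) [Fintype A] [Nonempty AP] (P : Form A AP → Prop) :
    PseudoData A AP {Γ : Set (Form A AP) // MaxConsistent P Γ} where
  rel := fun B Γ Δ => ∀ (hB : B.Nonempty) (φ : Form A AP), Form.dk B hB φ ∈ Γ.1 → φ ∈ Δ.1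
  label := fun Γ => {p | Form.atom p ∈ Γ.1}

/-- `IsHist M w l` : the sequence starting at `w` with steps `l` is a history of `M`. -/
def IsHist {A AP W : Type} (M : PseudoData A AP W) : W → List (Finset A × W) → Prop
  | _, [] => True
  | w, (B, w') :: t => M.rel B w w' ∧ IsHist M w' t

/-- A history `(w₀, B₁, w₁, …, B_k, w_k)` of a pseudo-model `M`. -/
structure Hist {A AP W : Type} (M : PseudoData A AP W) where
  first : W
  steps : List (Finset A × W)
  valid : IsHist M first steps

/-- The last world of a history. -/
def Hist.last {A AP W : Type} {M : PseudoData A AP W} (h : Hist M) : W :=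
  (h.steps.map Prod.snd).getLastD h.first

/-- `h →_a h'` : `h'` extends `h` by one step `(B, w)` with `a ∈ B`. -/
def histStep {A AP W : Type} (M : PseudoData A AP W) (a : A) (h h' : Hist M) : Prop :=
  ∃ (B : Finset A) (w : W), a ∈ B ∧ h'.first = h.first ∧ h'.steps = h.steps ++ [(B, w)]

/-- `∼^U_a` : the symmetric-transitive closure of `→_a`. -/
def histRel {A AP W : Type} (M : PseudoData A AP W) (a : A) : Hist M → Hist M → Prop :=
  Relation.TransGen (fun h h' => histStep M a h h' ∨ histStep M a h' h)

/-- The unravelling `U(M)` of a pseudo-model `M`: worlds are histories, relations are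
the `∼^U_a`, and `L^U(h) = L(last h)`. -/
def unravel {A AP W : Type} (M : PseudoData A AP W) : PEData A AP (Hist M) where
  rel := histRel M
  label := fun h => M.label h.last

/-- World-equivalence `w ≡ w'` : same alive agents and related by every alive agent. -/
def pequiv {A AP W : Type} (M : PEData A AP W) (w w' : W) : Prop :=
  M.live w = M.live w' ∧ ∀ a ∈ M.live w, M.rel a w w'

/-- The quotient of a partial epistemic model by world-equivalence. -/
def properify {A AP W : Type} (M : PEData A AP W) : PEData A AP (Quot (pequiv M)) where
  rel := fun a x y => ∃ w w' : W, x = Quot.mk _ w ∧ y = Quot.mk _ w' ∧ M.rel a w w'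
  label := fun x => {p | ∃ w : W, x = Quot.mk _ w ∧ p ∈ M.label w}

/-! ### Local simplicial models, morphisms and the guarded positive fragment -/

/-- The data of a local simplicial model: atomic propositions label the vertices. -/
structure LocalSimpData (A AP V : Type) where
  S : Set (Finset V)
  chi : V → A
  Wld : Set (Finset V)
  vlabel : V → Set AP

namespace LocalSimpData

variable {A AP V : Type}

/-- A facet: a simplex maximal under inclusion. -/
def IsFacet (C : LocalSimpData A AP V) (X : Finset V) : Prop :=
  X ∈ C.S ∧ ∀ Y ∈ C.S, X ⊆ Y → X = Y

/-- `C` is a local simplicial model with respect to the ownership map `owner : AP → A`: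
a chromatic simplicial complex with `Facets ⊆ Wld ⊆ S`, where each vertex is labelled
with atomic propositions belonging to its colour. -/
def IsModel (C : LocalSimpData A AP V) (owner : AP → A) : Prop :=
  (∀ X ∈ C.S, X.Nonempty) ∧
  (∀ v : V, ({v} : Finset V) ∈ C.S) ∧
  (∀ X ∈ C.S, ∀ Y : Finset V, Y ⊆ X → Y.Nonempty → Y ∈ C.S) ∧
  (∀ X ∈ C.S, ∀ v ∈ X, ∀ w ∈ X, C.chi v = C.chi w → v = w) ∧
  (∀ X, C.IsFacet X → X ∈ C.Wld) ∧ C.Wld ⊆ C.S ∧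
  (∀ v : V, ∀ p ∈ C.vlabel v, owner p = C.chi v)

/-- The labelling of a world: the union of the labellings of its vertices. -/
def wlabel (C : LocalSimpData A AP V) (X : Finset V) : Set AP :=
  ⋃ v ∈ X, C.vlabel v

end LocalSimpData

/-- Purely propositional formulas. -/
inductive PForm (AP : Type) : Type
  | atom : AP → PForm AP
  | neg : PForm AP → PForm AP
  | and : PForm AP → PForm AP → PForm AP

/-- The atomic propositions occurring in a propositional formula. -/
def PForm.atoms {AP : Type} : PForm AP → Set AP
  | .atom p => {p}
  | .neg ψ => ψ.atoms
  | .and ψ χ => ψ.atoms ∪ χ.atoms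

/-- Satisfaction of propositional formulas at a world of a local simplicial model. -/
def PForm.psat {A AP V : Type} (C : LocalSimpData A AP V) (w : Finset V) : PForm AP → Prop
  | .atom p => p ∈ C.wlabel w
  | .neg ψ => ¬ PForm.psat C w ψ
  | .and ψ χ => PForm.psat C w ψ ∧ PForm.psat C w χ

/-- The guarded positive epistemic fragment:
`φ ::= (alive_B ⇒ ψ_B) | φ∧φ | φ∨φ | D_U φ | C_U φ`. -/
inductive GForm (A AP : Type) : Type
  | guard : Finset A → PForm AP → GForm A AP
  | and : GForm A AP → GForm A AP → GForm A AP
  | or : GForm A AP → GForm A AP → GForm A AP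
  | dk : Finset A → GForm A AP → GForm A AP
  | ck : Finset A → GForm A AP → GForm A AP

/-- Well-formedness of guarded formulas: in a guard `alive_B ⇒ ψ_B`, all atomic
propositions of `ψ_B` belong to agents of `B`. -/
def GForm.WF {A AP : Type} (owner : AP → A) : GForm A AP → Prop
  | .guard B ψ => ∀ p ∈ ψ.atoms, owner p ∈ B
  | .and φ₁ φ₂ => φ₁.WF owner ∧ φ₂.WF owner
  | .or φ₁ φ₂ => φ₁.WF owner ∧ φ₂.WF owner
  | .dk _ φ => φ.WF owner
  | .ck _ φ => φ.WF owner

/-- Reachability through a sequence of worlds, consecutive ones sharing a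
`U`-coloured simplex. -/
def creach {A AP V : Type} (C : LocalSimpData A AP V) (U : Finset A) :
    Finset V → Finset V → Prop :=
  Relation.ReflTransGen
    (fun X Y => Y ∈ C.Wld ∧ (↑U : Set A) ⊆ C.chi '' ((↑X : Set V) ∩ ↑Y))

/-- Satisfaction of guarded positive formulas on local simplicial models. -/
def GForm.gsat {A AP V : Type} (C : LocalSimpData A AP V) :
    Finset V → GForm A AP → Prop
  | w, .guard B ψ => ((↑B : Set A) ⊆ C.chi '' (↑w : Set V)) → ψ.psat C w
  | w, .and φ₁ φ₂ => φ₁.gsat C w ∧ φ₂.gsat C w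
  | w, .or φ₁ φ₂ => φ₁.gsat C w ∨ φ₂.gsat C w
  | w, .dk U φ => ∀ w' ∈ C.Wld, (↑U : Set A) ⊆ C.chi '' ((↑w : Set V) ∩ ↑w') → φ.gsat C w'
  | w, .ck U φ => ∀ w' ∈ C.Wld, creach C U w w' → φ.gsat C w'

/-- Image of a simplex under a vertex map. -/
def fimage {V V' : Type} (f : V → V') (X : Finset V) : Finset V' :=
  X.image f

/-- Morphisms of local simplicial models: map simplexes to simplexes and worlds to
worlds, preserving colours and vertex labellings. -/
def IsMorphism {A AP V V' : Type} (C : LocalSimpData A AP V) (D : LocalSimpData A AP V')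
    (f : V → V') : Prop :=
  (∀ X ∈ C.S, fimage f X ∈ D.S) ∧
  (∀ X ∈ C.Wld, fimage f X ∈ D.Wld) ∧
  (∀ v : V, D.chi (f v) = C.chi v) ∧
  (∀ v : V, D.vlabel (f v) = C.vlabel v)

end

/-! ### Auxiliary lemmas for the truth lemma -/

section TruthAux

attribute [local instance] Classical.propDecidable

variable {A AP : Type} [Fintype A] [Nonempty AP]

namespace TruthAux

lemma v_imp (v : Form A AP → Prop)
    (h1 : ∀ ψ : Form A AP, v ψ.neg ↔ ¬ v ψ)
    (h2 : ∀ ψ χ : Form A AP, v (ψ.and χ) ↔ (v ψ ∧ v χ)) (φ ψ : Form A AP) :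
    v (φ.imp ψ) ↔ (v φ → v ψ) := by
  simp only [Form.imp, Form.or, h1, h2]; tauto

lemma v_verum (v : Form A AP → Prop)
    (h1 : ∀ ψ : Form A AP, v ψ.neg ↔ ¬ v ψ)
    (h2 : ∀ ψ χ : Form A AP, v (ψ.and χ) ↔ (v ψ ∧ v χ)) :
    v (Form.verum : Form A AP) ↔ True := by
  simp only [Form.verum, Form.or, h1, h2]; tauto

lemma v_falsum (v : Form A AP → Prop)
    (h1 : ∀ ψ : Form A AP, v ψ.neg ↔ ¬ v ψ)
    (h2 : ∀ ψ χ : Form A AP, v (ψ.and χ) ↔ (v ψ ∧ v χ)) :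
    v (Form.falsum : Form A AP) ↔ False := by
  simp only [Form.falsum, h1, v_verum v h1 h2]; tauto

variable {Ax : Form A AP → Prop}

lemma prf_imp_of {φ ψ : Form A AP} (h : Prf Ax ψ) : Prf Ax (φ.imp ψ) := by
  refine Prf.mp (Prf.taut ?_) h
  intro v h1 h2
  simp only [v_imp v h1 h2]; tauto

lemma imp_trans {φ ψ χ : Form A AP} (h : Prf Ax (φ.imp ψ)) (h' : Prf Ax (ψ.imp χ)) :
    Prf Ax (φ.imp χ) := by
  refine Prf.mp (Prf.mp (Prf.taut ?_) h) h'
  intro v h1 h2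
  simp only [v_imp v h1 h2]; tauto

lemma bigAnd_elim {γ : Form A AP} : ∀ {L : List (Form A AP)}, γ ∈ L →
    Prf Ax ((Form.bigAnd L).imp γ)
  | δ :: t, h => by
    rcases List.mem_cons.mp h with h | h
    · subst h
      refine Prf.taut ?_
      intro v h1 h2
      simp only [Form.bigAnd, v_imp v h1 h2, h2]; tauto
    · have ih : Prf Ax ((Form.bigAnd t).imp γ) := bigAnd_elim h
      refine imp_trans (Prf.taut ?_) ih
      intro v h1 h2
      simp only [Form.bigAnd, v_imp v h1 h2, h2]; tauto

lemma imp_bigAnd {χ : Form A AP} : ∀ {L : List (Form A AP)},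
    (∀ γ ∈ L, Prf Ax (χ.imp γ)) → Prf Ax (χ.imp (Form.bigAnd L))
  | [], _ => by
    refine Prf.taut ?_
    intro v h1 h2
    simp only [Form.bigAnd, v_imp v h1 h2, v_verum v h1 h2]; tauto
  | γ :: t, h => by
    have ih : Prf Ax (χ.imp (Form.bigAnd t)) := imp_bigAnd (fun δ hδ => h δ (List.mem_cons_of_mem _ hδ))
    have hγ : Prf Ax (χ.imp γ) := h γ (List.mem_cons_self)
    refine Prf.mp (Prf.mp (Prf.taut ?_) hγ) ih
    intro v h1 h2
    simp only [Form.bigAnd, v_imp v h1 h2, h2]; tauto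

lemma bigAnd_mono {L L' : List (Form A AP)} (h : ∀ γ ∈ L, γ ∈ L') :
    Prf Ax ((Form.bigAnd L').imp (Form.bigAnd L)) :=
  imp_bigAnd (fun γ hγ => bigAnd_elim (h γ hγ))

lemma dk_bigAnd (B : Finset A) (hB : B.Nonempty) : ∀ (L : List (Form A AP)),
    Prf Ax ((Form.bigAnd (L.map (Form.dk B hB))).imp (Form.dk B hB (Form.bigAnd L)))
  | [] => by
    have h : Prf Ax (Form.dk B hB (Form.verum : Form A AP)) := by
      refine Prf.nec B hB (Prf.taut ?_)
      intro v h1 h2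
      exact (v_verum v h1 h2).mpr trivial
    exact prf_imp_of h
  | γ :: t => by
    have ih := dk_bigAnd B hB t
    have h1 : Prf Ax (Form.dk B hB (γ.imp ((Form.bigAnd t).imp (γ.and (Form.bigAnd t))))) := by
      refine Prf.nec B hB (Prf.taut ?_)
      intro v h1 h2
      simp only [v_imp v h1 h2, h2]; tauto
    have h2 : Prf Ax ((Form.dk B hB γ).imp
        (Form.dk B hB ((Form.bigAnd t).imp (γ.and (Form.bigAnd t))))) :=
      Prf.mp (Prf.axK B hB) h1
    have h3 : Prf Ax ((Form.dk B hB ((Form.bigAnd t).imp (γ.and (Form.bigAnd t)))).imp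
        ((Form.dk B hB (Form.bigAnd t)).imp (Form.dk B hB (γ.and (Form.bigAnd t))))) :=
      Prf.axK B hB
    have h4 : Prf Ax ((Form.dk B hB γ).imp
        ((Form.dk B hB (Form.bigAnd t)).imp (Form.dk B hB (γ.and (Form.bigAnd t))))) :=
      imp_trans h2 h3
    show Prf Ax ((Form.bigAnd ((Form.dk B hB γ) :: t.map (Form.dk B hB))).imp
        (Form.dk B hB (γ.and (Form.bigAnd t))))
    refine Prf.mp (Prf.mp (Prf.taut ?_) h4) ih
    intro v hv1 hv2
    simp only [Form.bigAnd, v_imp v hv1 hv2, hv2]; tauto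

/-! ### ProvesFrom lemmas -/

lemma provesFrom_of_prf {Γ : Set (Form A AP)} {φ : Form A AP} (h : Prf Ax φ) :
    ProvesFrom (Prf Ax) Γ φ :=
  ⟨[], by simp, prf_imp_of h⟩

lemma provesFrom_mem {Γ : Set (Form A AP)} {φ : Form A AP} (h : φ ∈ Γ) :
    ProvesFrom (Prf Ax) Γ φ :=
  ⟨[φ], by simpa using h, bigAnd_elim (List.mem_cons_self)⟩

lemma provesFrom_mp {Γ : Set (Form A AP)} {φ ψ : Form A AP}
    (h1 : ProvesFrom (Prf Ax) Γ (φ.imp ψ)) (h2 : ProvesFrom (Prf Ax) Γ φ) :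
    ProvesFrom (Prf Ax) Γ ψ := by
  obtain ⟨L1, hL1, hp1⟩ := h1
  obtain ⟨L2, hL2, hp2⟩ := h2
  refine ⟨L1 ++ L2, ?_, ?_⟩
  · intro γ hγ
    rcases List.mem_append.mp hγ with h | h
    · exact hL1 γ h
    · exact hL2 γ h
  · have m1 : Prf Ax ((Form.bigAnd (L1 ++ L2)).imp (φ.imp ψ)) :=
      imp_trans (bigAnd_mono (fun γ hγ => List.mem_append_left _ hγ)) hp1
    have m2 : Prf Ax ((Form.bigAnd (L1 ++ L2)).imp φ) :=
      imp_trans (bigAnd_mono (fun γ hγ => List.mem_append_right _ hγ)) hp2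
    refine Prf.mp (Prf.mp (Prf.taut ?_) m1) m2
    intro v h1 h2
    simp only [v_imp v h1 h2]; tauto

lemma deduction {Γ : Set (Form A AP)} {φ ψ : Form A AP}
    (h : ProvesFrom (Prf Ax) (insert φ Γ) ψ) : ProvesFrom (Prf Ax) Γ (φ.imp ψ) := by
  obtain ⟨L, hL, hp⟩ := h
  refine ⟨L.filter (fun γ => γ ≠ φ), ?_, ?_⟩
  · intro γ hγ
    obtain ⟨hγL, hγφ⟩ := List.mem_filter.mp hγ
    rcases hL γ hγL with h | h
    · exact absurd h (by simpa using hγφ)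
    · exact h
  · have hmono : Prf Ax ((Form.bigAnd (φ :: L.filter (fun γ => γ ≠ φ))).imp (Form.bigAnd L)) := by
      refine bigAnd_mono ?_
      intro γ hγ
      by_cases h : γ = φ
      · exact h ▸ (List.mem_cons_self)
      · exact List.mem_cons_of_mem _ (List.mem_filter.mpr ⟨hγ, by simpa using h⟩)
    have h2 : Prf Ax ((Form.bigAnd (φ :: L.filter (fun γ => γ ≠ φ))).imp ψ) := imp_trans hmono hp
    refine Prf.mp (Prf.taut ?_) h2
    intro v h1 hv2
    simp only [Form.bigAnd, v_imp v h1 hv2, hv2]; tauto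

/-! ### Maximal consistent set lemmas -/

lemma mcs_mem {Γ : Set (Form A AP)} (hΓ : MaxConsistent (Prf Ax) Γ) {φ : Form A AP}
    (h : ProvesFrom (Prf Ax) Γ φ) : φ ∈ Γ := by
  by_contra hφ
  have hinc := hΓ.2 φ hφ
  rw [ConsistentSet, not_not] at hinc
  have hded : ProvesFrom (Prf Ax) Γ (φ.imp Form.falsum) := deduction hinc
  exact hΓ.1 (provesFrom_mp hded h)

lemma mcs_prf {Γ : Set (Form A AP)} (hΓ : MaxConsistent (Prf Ax) Γ) {φ : Form A AP}
    (h : Prf Ax φ) : φ ∈ Γ := mcs_mem hΓ (provesFrom_of_prf h)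

lemma mcs_neg {Γ : Set (Form A AP)} (hΓ : MaxConsistent (Prf Ax) Γ) (φ : Form A AP) :
    φ.neg ∈ Γ ↔ φ ∉ Γ := by
  constructor
  · intro hn hφ
    refine hΓ.1 (provesFrom_mp (φ := φ.neg) ?_ (provesFrom_mem hn))
    refine provesFrom_mp (φ := φ) (provesFrom_of_prf (Prf.taut ?_)) (provesFrom_mem hφ)
    intro v h1 h2
    simp only [v_imp v h1 h2, h1, v_falsum v h1 h2]; tauto
  · intro hφ
    have hinc := hΓ.2 φ hφ
    rw [ConsistentSet, not_not] at hinc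
    have hded : ProvesFrom (Prf Ax) Γ (φ.imp Form.falsum) := deduction hinc
    refine mcs_mem hΓ (provesFrom_mp (φ := φ.imp Form.falsum)
      (provesFrom_of_prf (Prf.taut ?_)) hded)
    intro v h1 h2
    simp only [v_imp v h1 h2, h1, v_falsum v h1 h2]; tauto

lemma mcs_and {Γ : Set (Form A AP)} (hΓ : MaxConsistent (Prf Ax) Γ) (φ ψ : Form A AP) :
    φ.and ψ ∈ Γ ↔ (φ ∈ Γ ∧ ψ ∈ Γ) := by
  constructor
  · intro h
    constructor
    · refine mcs_mem hΓ (provesFrom_mp (φ := φ.and ψ)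
        (provesFrom_of_prf (Prf.taut ?_)) (provesFrom_mem h))
      intro v h1 h2
      simp only [v_imp v h1 h2, h2]; tauto
    · refine mcs_mem hΓ (provesFrom_mp (φ := φ.and ψ)
        (provesFrom_of_prf (Prf.taut ?_)) (provesFrom_mem h))
      intro v h1 h2
      simp only [v_imp v h1 h2, h2]; tauto
  · rintro ⟨h1, h2⟩
    refine mcs_mem hΓ (provesFrom_mp (φ := ψ) (provesFrom_mp (φ := φ)
      (provesFrom_of_prf (Prf.taut ?_)) (provesFrom_mem h1)) (provesFrom_mem h2))
    intro v hv1 hv2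
    simp only [v_imp v hv1 hv2, hv2]; tauto

/-! ### Lindenbaum -/

lemma lindenbaum {P : Form A AP → Prop} {Γ : Set (Form A AP)} (h : ConsistentSet P Γ) :
    ∃ Δ : Set (Form A AP), Γ ⊆ Δ ∧ MaxConsistent P Δ := by
  obtain ⟨Δ, hΓΔ, hmax⟩ := zorn_subset_nonempty {Δ : Set (Form A AP) | ConsistentSet P Δ}
    (fun c hc hchain hne => by
      refine ⟨⋃₀ c, ?_, fun s hs => Set.subset_sUnion_of_mem hs⟩
      rintro ⟨L, hL, hp⟩
      have key : ∀ L' : List (Form A AP), (∀ γ ∈ L', γ ∈ ⋃₀ c) → ∃ s ∈ c, ∀ γ ∈ L', γ ∈ s := by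
        intro L'
        induction L' with
        | nil => exact fun _ => ⟨hne.choose, hne.choose_spec, by simp⟩
        | cons γ t ih =>
          intro hL'
          obtain ⟨s1, hs1, hs1'⟩ := ih (fun δ hδ => hL' δ (List.mem_cons_of_mem _ hδ))
          obtain ⟨s2, hs2⟩ := hL' γ (List.mem_cons_self)
          obtain ⟨s, hs, h1, h2⟩ := hchain.directedOn s1 hs1 s2 hs2.1
          exact ⟨s, hs, fun δ hδ => by
            rcases List.mem_cons.mp hδ with h | h
            · exact h ▸ h2 hs2.2
            · exact h1 (hs1' δ h)⟩
      obtain ⟨s, hsc, hsL⟩ := key L hL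
      exact hc hsc ⟨L, hsL, hp⟩) Γ h
  refine ⟨Δ, hΓΔ, hmax.1, ?_⟩
  intro φ hφ hcon
  have := hmax.2 hcon (Set.subset_insert φ Δ)
  exact hφ (this (Set.mem_insert φ Δ))

end TruthAux

end TruthAux

/-- Truth Lemma for the canonical pseudo-model: for every formula `φ` of
`L_D` and every maximal `SC`-consistent set `Γ`, `φ ∈ Γ` iff `Mc,Γ ⊨ φ`. -/
theorem truth_lemma (A AP : Type) [Fintype A] [Nonempty AP]
    (Γ : {Γ : Set (Form A AP) // MaxConsistent SC Γ}) (φ : Form A AP) :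
    φ ∈ Γ.1 ↔ (canonicalPsm A AP SC).sat Γ φ := by
  classical
  induction φ generalizing Γ with
  | atom p => exact Iff.rfl
  | neg ψ ih =>
    rw [show (canonicalPsm A AP SC).sat Γ ψ.neg ↔ ¬ (canonicalPsm A AP SC).sat Γ ψ from Iff.rfl,
      ← ih Γ]
    exact TruthAux.mcs_neg Γ.2 ψ
  | and ψ χ ih1 ih2 =>
    rw [show (canonicalPsm A AP SC).sat Γ (ψ.and χ) ↔
        ((canonicalPsm A AP SC).sat Γ ψ ∧ (canonicalPsm A AP SC).sat Γ χ) from Iff.rfl,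
      ← ih1 Γ, ← ih2 Γ]
    exact TruthAux.mcs_and Γ.2 ψ χ
  | dk B hB ψ ih =>
    constructor
    · intro h Δ hrel
      exact (ih Δ).mp (hrel hB ψ h)
    · intro h
      by_contra hmem
      -- the set {χ | D_B χ ∈ Γ} ∪ {¬ψ} is consistent
      set Λ0 : Set (Form A AP) := {χ | Form.dk B hB χ ∈ Γ.1} with hΛ0
      have hcon : ConsistentSet SC (insert ψ.neg Λ0) := by
        intro hinc
        have hded : ProvesFrom SC Λ0 (ψ.neg.imp Form.falsum) := TruthAux.deduction hinc
        obtain ⟨L, hL, hp⟩ := hded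
        have hp2 : Prf (fun _ => False) ((Form.bigAnd L).imp ψ) := by
          refine Prf.mp (Prf.taut ?_) hp
          intro v h1 h2
          simp only [TruthAux.v_imp v h1 h2, h1, TruthAux.v_falsum v h1 h2]; tauto
        have hnec : Prf (fun _ => False) (Form.dk B hB ((Form.bigAnd L).imp ψ)) :=
          Prf.nec B hB hp2
        have hk : Prf (fun _ => False)
            ((Form.dk B hB (Form.bigAnd L)).imp (Form.dk B hB ψ)) :=
          Prf.mp (Prf.axK B hB) hnec
        have hdkL : Prf (fun _ => False)
            ((Form.bigAnd (L.map (Form.dk B hB))).imp (Form.dk B hB ψ)) :=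
          TruthAux.imp_trans (TruthAux.dk_bigAnd B hB L) hk
        have hpf : ProvesFrom SC Γ.1 (Form.dk B hB ψ) := by
          refine ⟨L.map (Form.dk B hB), ?_, hdkL⟩
          intro γ hγ
          obtain ⟨δ, hδ, rfl⟩ := List.mem_map.mp hγ
          exact hL δ hδ
        exact hmem (TruthAux.mcs_mem Γ.2 hpf)
      obtain ⟨Δ, hΔsub, hΔmax⟩ := TruthAux.lindenbaum hcon
      have hrel : (canonicalPsm A AP SC).rel B Γ ⟨Δ, hΔmax⟩ := by
        intro hB' χ hχ
        exact hΔsub (Set.mem_insert_of_mem _ hχ)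
      have hsat : (canonicalPsm A AP SC).sat ⟨Δ, hΔmax⟩ ψ := h ⟨Δ, hΔmax⟩ hrel
      have hψΔ : ψ ∈ Δ := (ih ⟨Δ, hΔmax⟩).mpr hsat
      have hnψΔ : ψ.neg ∈ Δ := hΔsub (Set.mem_insert _ _)
      exact (TruthAux.mcs_neg hΔmax ψ).mp hnψΔ hψΔ
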